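/- Let V > 0, l > 0 and d ≠ 0. Let I ⊆ ℝ be a nontrivial interval, κ : ℝ → ℝ, and let s_D, e_D, θ_D : I → ℝ be differentiable and γ : I → (−π/2, π/2) be such that the path-following dynamics hold on I: ė_D(t) = V(sin θ_D(t) + (d/l)·tan γ(t)·cos θ_D(t)) and θ̇_D(t) = (V/l)·tan γ(t) − V·κ(s_D(t))·(1 − e_D(t)·κ(s_D(t)))⁻¹·(cos θ_D(t) − (d/l)·tan γ(t)·sin θ_D(t)). If e_D(t) = 0 and θ_D(t) = 0 for all t ∈ I, then κ(s_D(t)) = 0 for all t ∈ I. In particular, on a path of nonzero curvature no steering input can maintain zero lateral deviation and zero yaw angle error simultaneously when d ≠ 0. -/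

import Mathlib

open Real Set

theorem no_simultaneous_zero_errors_on_curves
    (V l d : ℝ) (hV : 0 < V) (hl : 0 < l) (hd : d ≠ 0)
    (I : Set ℝ) (hI : I.OrdConnected) (hInt : I.Nontrivial)
    (κ : ℝ → ℝ) (sD eD θD γ : ℝ → ℝ)
    (hγrange : ∀ t ∈ I, γ t ∈ Set.Ioo (-(π / 2)) (π / 2))
    (heD : ∀ t ∈ I, HasDerivWithinAt eD
        (V * (Real.sin (θD t) + d / l * Real.tan (γ t) * Real.cos (θD t))) I t)
    (hθD : ∀ t ∈ I, HasDerivWithinAt θD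
        (V / l * Real.tan (γ t)
          - V * κ (sD t) / (1 - eD t * κ (sD t)) *
            (Real.cos (θD t) - d / l * Real.tan (γ t) * Real.sin (θD t))) I t)
    (heD0 : ∀ t ∈ I, eD t = 0) (hθD0 : ∀ t ∈ I, θD t = 0) :
    ∀ t ∈ I, κ (sD t) = 0 := by
  have hconv : Convex ℝ I := hI.convex
  -- interior nonempty
  obtain ⟨a, ha, b, hb, hab⟩ := hInt
  have hint : (interior I).Nonempty := by
    rcases lt_or_gt_of_ne hab with h | h
    · have : Ioo a b ⊆ interior I := by
        rw [← interior_Icc]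
        exact interior_mono (hconv.ordConnected.out ha hb)
      exact ⟨(a + b) / 2, this ⟨by linarith, by linarith⟩⟩
    · have : Ioo b a ⊆ interior I := by
        rw [← interior_Icc]
        exact interior_mono (hconv.ordConnected.out hb ha)
      exact ⟨(a + b) / 2, this ⟨by linarith, by linarith⟩⟩
  intro t ht
  have hud : UniqueDiffWithinAt ℝ I t :=
    uniqueDiffWithinAt_convex hconv hint (subset_closure ht)
  -- eD and θD are zero on I, so derivative within I is 0
  have heD' : HasDerivWithinAt eD 0 I t :=
    (hasDerivWithinAt_const t I (0 : ℝ)).congr (fun x hx => heD0 x hx) (heD0 t ht)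
  have hθD' : HasDerivWithinAt θD 0 I t :=
    (hasDerivWithinAt_const t I (0 : ℝ)).congr (fun x hx => hθD0 x hx) (hθD0 t ht)
  have h1 : V * (Real.sin (θD t) + d / l * Real.tan (γ t) * Real.cos (θD t)) = 0 :=
    ((heD t ht).derivWithin hud).symm.trans (heD'.derivWithin hud)
  have h2 : V / l * Real.tan (γ t)
      - V * κ (sD t) / (1 - eD t * κ (sD t)) *
        (Real.cos (θD t) - d / l * Real.tan (γ t) * Real.sin (θD t)) = 0 :=
    ((hθD t ht).derivWithin hud).symm.trans (hθD'.derivWithin hud)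
  rw [hθD0 t ht] at h1 h2
  rw [heD0 t ht] at h2
  simp only [Real.sin_zero, Real.cos_zero, mul_one, mul_zero, add_zero, zero_add, sub_zero, zero_mul] at h1 h2
  have htan : Real.tan (γ t) = 0 := by
    field_simp at h1
    rw [mul_zero, mul_assoc] at h1
    rcases mul_eq_zero.mp h1 with h | h
    · exact absurd h hV.ne'
    · rcases mul_eq_zero.mp h with h | h
      · exact absurd h hd
      · exact h
  rw [htan] at h2
  field_simp at h2
  rw [mul_zero] at h2
  rcases mul_eq_zero.mp h2 with h | h
  · exact absurd h hV.ne'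
  · exact (mul_eq_zero.mp (by linarith : l * κ (sD t) = 0)).resolve_left hl.ne'
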